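/- For f a transversal endomorphism of ℙ¹ of degree d ≥ 2 with fixed points p_i and multipliers λ_i = f'(p_i), one has ∑_i λ_i/(1 − λ_i) = −d (the case k = 1 of the Woods Hole formula on ℙ¹). -/

import Mathlib

open Polynomial

/-- The multiplier of the rational map `f = p/q` at a point `z` (with `q(z) ≠ 0`):
the value `f'(z) = (p'(z)q(z) − p(z)q'(z))/q(z)²`. -/
noncomputable def multiplier (p q : Polynomial ℂ) (z : ℂ) : ℂ :=
  (p.derivative.eval z * q.eval z - p.eval z * q.derivative.eval z) / (q.eval z) ^ 2

/-- Holomorphic Lefschetz fixed point formula on `ℙ¹`: a transversal endomorphism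
`f = p/q` of `ℙ¹` of degree `d ≥ 2` has its fixed points at the roots of
`R(z) = p(z) − z·q(z)`, a polynomial of degree `d + 1` assumed squarefree (simple fixed
points, none at infinity); with multipliers `λ_z = f'(z) ≠ 1` one has
`∑_{f(z)=z} λ_z/(1 − λ_z) = −d` (the case `k = 1` of the Woods Hole formula on `ℙ¹`). -/
theorem woods_hole_P1_k_one (d : ℕ) (hd : 2 ≤ d) (p q : Polynomial ℂ)
    (hp : p.natDegree ≤ d) (hq : q.natDegree ≤ d)
    (hR : (p - X * q).natDegree = d + 1)
    (hsq : Squarefree (p - X * q))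
    (hq0 : ∀ z ∈ (p - X * q).roots, q.eval z ≠ 0)
    (hmul : ∀ z ∈ (p - X * q).roots, multiplier p q z ≠ 1) :
    ∑ z ∈ (p - X * q).roots.toFinset, multiplier p q z / (1 - multiplier p q z) = -(d : ℂ) := by
  classical
  set R := p - X * q with hRdef
  have hR0 : R ≠ 0 := fun h => by simp [h] at hR
  have hnodup : R.roots.Nodup := Polynomial.nodup_roots (PerfectField.separable_iff_squarefree.mpr hsq)
  set s := R.roots.toFinset with hs
  have hsval : s.val = R.roots := by
    rw [hs, Multiset.toFinset_val, hnodup.dedup]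
  have hcard : s.card = d + 1 := by
    rw [Finset.card, hsval, ← hR]
    have := (IsAlgClosed.splits R).natDegree_eq_card_roots
    rwa [eq_comm] at this
  set c := R.leadingCoeff with hc
  have hc0 : c ≠ 0 := leadingCoeff_ne_zero.mpr hR0
  -- c = - q.coeff d
  have hcq : c = -(q.coeff d) := by
    rw [hc, leadingCoeff, hR, hRdef, coeff_sub, coeff_X_mul,
      coeff_eq_zero_of_natDegree_lt (lt_of_le_of_lt hp (Nat.lt_succ_self d)), zero_sub]
  have hqd : q.coeff d ≠ 0 := by
    intro h; exact hc0 (by rw [hcq, h, neg_zero])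
  -- R as a product over nodal
  have hinj : Set.InjOn (id : ℂ → ℂ) s := Set.injOn_id _
  have hnodal : R = C c * Lagrange.nodal s id := by
    have := (IsAlgClosed.splits R).eq_prod_roots
    rw [this, Lagrange.nodal, Finset.prod_eq_multiset_prod, hsval]
    rfl
  -- interpolation of q
  have hqdeg : q.degree < (s.card : ℕ) := by
    rw [hcard]
    calc q.degree ≤ (q.natDegree : WithBot ℕ) := degree_le_natDegree
    _ ≤ (d : WithBot ℕ) := by exact_mod_cast hq
    _ < ((d + 1 : ℕ) : WithBot ℕ) := by exact_mod_cast Nat.lt_succ_self d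
  have hinterp : Lagrange.interpolate s id (fun z => q.eval z) = q :=
    (Lagrange.eq_interpolate hinj hqdeg).symm
  -- coefficient extraction
  have hsum : ∑ z ∈ s, q.eval z * Lagrange.nodalWeight s id z = q.coeff d := by
    have h1 : q.coeff d = (Lagrange.interpolate s id (fun z => q.eval z)).coeff d := by
      rw [hinterp]
    rw [h1, Lagrange.interpolate_apply, finset_sum_coeff]
    refine Finset.sum_congr rfl fun z hz => ?_
    have hbasis : Lagrange.basis s id z = C (Lagrange.nodalWeight s id z) *
        Lagrange.nodal (s.erase z) id := by
      rw [Lagrange.basis_eq_prod_sub_inv_mul_nodal_div hz,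
        Lagrange.nodal_erase_eq_nodal_div hz]
    rw [hbasis, coeff_C_mul, coeff_C_mul]
    have hdeg : (Lagrange.nodal (s.erase z) id).natDegree = d := by
      rw [Lagrange.natDegree_nodal, Finset.card_erase_of_mem hz, hcard]
      omega
    have : (Lagrange.nodal (s.erase z) id).coeff d = 1 := by
      rw [← hdeg]; exact Lagrange.nodal_monic.coeff_natDegree
    rw [this, mul_one]
  -- per point identity
  have hpt : ∀ z ∈ s, multiplier p q z / (1 - multiplier p q z)
      = -1 - q.eval z * Lagrange.nodalWeight s id z / c := by
    intro z hz
    have hzr : z ∈ R.roots := Multiset.mem_toFinset.mp hz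
    have hqz : q.eval z ≠ 0 := hq0 z hzr
    have hw0 : Lagrange.nodalWeight s id z ≠ 0 := Lagrange.nodalWeight_ne_zero hinj hz
    have hev : R.eval z = 0 := (mem_roots hR0).mp hzr
    have hpz : p.eval z = z * q.eval z := by
      have : p.eval z - z * q.eval z = 0 := by
        simpa [hRdef, eval_sub, eval_mul] using hev
      exact sub_eq_zero.mp this
    -- derivative at root
    have hDz : R.derivative.eval z = c * (Lagrange.nodalWeight s id z)⁻¹ := by
      rw [hnodal, derivative_C_mul, eval_mul, eval_C,
        Lagrange.nodalWeight_eq_eval_derivative_nodal hz, inv_inv]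
      rfl
    set w := Lagrange.nodalWeight s id z
    set Dz := R.derivative.eval z with hDzdef
    have hDz' : p.derivative.eval z - q.eval z - z * q.derivative.eval z = Dz := by
      rw [hDzdef, hRdef]
      simp [derivative_sub, derivative_mul]
      ring
    have hDz0 : Dz ≠ 0 := by
      rw [hDz]
      exact mul_ne_zero hc0 (inv_ne_zero hw0)
    have hm : multiplier p q z = (Dz + q.eval z) / q.eval z := by
      rw [multiplier, hpz, ← hDz']
      field_simp
      ring
    have h1m : 1 - multiplier p q z = -Dz / q.eval z := by
      rw [hm]; field_simp; ring
    rw [h1m, hm, hDz]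
    field_simp
    ring
  rw [Finset.sum_congr rfl hpt, Finset.sum_sub_distrib, Finset.sum_const, hcard,
    ← Finset.sum_div, hsum, hcq]
  have : (q.coeff d) / -(q.coeff d) = -1 := by
    field_simp
  rw [this]
  push_cast
  ring
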